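/- Let 0 < q < 1 be real. For every complex z with Re(z) > 0, the Jackson q-integral of t^{z-1} E_q(-qt) over [0,1] is given by the absolutely convergent series ∫₀¹ t^{z-1} E_q(-qt) d_q t = Σ_{j≥0} (-1)^j q^{j(j+1)/2} / ([j]_q! · [z+j]_q). -/

import Mathlib

open Filter Topology

/-- The `q`-number `[n]_q = (1 - q^n)/(1 - q)`. -/
noncomputable def qNum (q : ℂ) (n : ℕ) : ℂ := (1 - q ^ n) / (1 - q)

/-- The `q`-factorial `[n]_q! = [n]_q [n-1]_q ⋯ [1]_q`, with `[0]_q! = 1`. -/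
noncomputable def qFact (q : ℂ) : ℕ → ℂ
  | 0 => 1
  | n + 1 => qNum q (n + 1) * qFact q n

/-- The `q`-number `[w]_q = (1 - q^w)/(1 - q)` of a complex number `w`,
via the principal branch `q^w = exp(w log q)`. -/
noncomputable def qNumC (q w : ℂ) : ℂ := (1 - q ^ w) / (1 - q)

/-- The (entire) `q`-exponential `E_q(w) = ∑ q^{l(l-1)/2} w^l/[l]_q!`. -/
noncomputable def qExpE (q w : ℂ) : ℂ :=
  ∑' l : ℕ, q ^ (l * (l - 1) / 2) * w ^ l / qFact q l

lemma qFact_exists_real {q : ℝ} (hq0 : 0 < q) (hq1 : q < 1) (j : ℕ) :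
    ∃ r : ℝ, 1 ≤ r ∧ qFact (q : ℂ) j = (r : ℂ) := by
  induction j with
  | zero => exact ⟨1, le_refl _, by simp [qFact]⟩
  | succ n ih =>
    obtain ⟨r, hr, hre⟩ := ih
    have hqn : q ^ (n + 1) ≤ q := by
      calc q ^ (n + 1) ≤ q ^ 1 := pow_le_pow_of_le_one hq0.le hq1.le (by omega)
      _ = q := pow_one q
    have h1q : (0:ℝ) < 1 - q := by linarith
    have hnum : (1:ℝ) ≤ (1 - q ^ (n + 1)) / (1 - q) := by
      rw [le_div_iff₀ h1q]; linarith
    refine ⟨(1 - q ^ (n + 1)) / (1 - q) * r, ?_, ?_⟩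
    · nlinarith
    · show qNum (q:ℂ) (n+1) * qFact (q:ℂ) n = _
      rw [hre, qNum]
      push_cast
      ring

lemma one_le_norm_qFact {q : ℝ} (hq0 : 0 < q) (hq1 : q < 1) (j : ℕ) :
    1 ≤ ‖qFact (q : ℂ) j‖ := by
  obtain ⟨r, hr, hre⟩ := qFact_exists_real hq0 hq1 j
  rw [hre, Complex.norm_real, Real.norm_eq_abs, abs_of_pos (by linarith)]
  exact hr

lemma qFact_ne_zero {q : ℝ} (hq0 : 0 < q) (hq1 : q < 1) (j : ℕ) :
    qFact (q : ℂ) j ≠ 0 := by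
  intro h
  have := one_le_norm_qFact hq0 hq1 j
  rw [h] at this; norm_num at this

/-- For `0 < q < 1` and `Re z > 0`, the Jackson `q`-integral
`∫₀¹ t^{z-1} E_q(-qt) d_q t = (1-q)·∑_{l≥0} q^l (q^l)^{z-1} E_q(-q·q^l)` equals the
absolutely convergent series `∑_{j≥0} (-1)^j q^{j(j+1)/2}/([j]_q! [z+j]_q)`. -/
theorem jackson_qIntegral_qExpE (q : ℝ) (hq : q ∈ Set.Ioo (0 : ℝ) 1)
    (z : ℂ) (hz : 0 < z.re) :
    (Summable fun j : ℕ =>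
      ‖(-1 : ℂ) ^ j * (q : ℂ) ^ (j * (j + 1) / 2) /
        (qFact (q : ℂ) j * qNumC (q : ℂ) (z + (j : ℂ)))‖) ∧
      (1 - (q : ℂ)) *
          ∑' l : ℕ, (q : ℂ) ^ l * (((q : ℂ) ^ l : ℂ) ^ (z - 1)) *
            qExpE (q : ℂ) (-(q : ℂ) * (q : ℂ) ^ l) =
        ∑' j : ℕ, (-1 : ℂ) ^ j * (q : ℂ) ^ (j * (j + 1) / 2) /
          (qFact (q : ℂ) j * qNumC (q : ℂ) (z + (j : ℂ))) := by
  obtain ⟨hq0, hq1⟩ := hq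
  set L : ℂ := (Real.log q : ℂ) with hLdef
  have hQ0 : (q : ℂ) ≠ 0 := by exact_mod_cast hq0.ne'
  -- cpow as exp
  have hcpow : ∀ w : ℂ, (q : ℂ) ^ w = Complex.exp (w * L) := by
    intro w
    rw [Complex.cpow_def_of_ne_zero hQ0, ← Complex.ofReal_log hq0.le, mul_comm]
  have hnpow : ∀ l : ℕ, (q : ℂ) ^ l = Complex.exp ((l : ℂ) * L) := by
    intro l
    rw [← Complex.cpow_natCast _ l, hcpow]
  have hcpowl : ∀ (l : ℕ) (w : ℂ), ((q : ℂ) ^ l) ^ w = Complex.exp (w * ((l : ℂ) * L)) := by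
    intro l w
    have hb : ((q : ℂ) ^ l) = ((q ^ l : ℝ) : ℂ) := by push_cast; ring
    have hb0 : ((q ^ l : ℝ) : ℂ) ≠ 0 := by
      exact_mod_cast (pow_pos hq0 l).ne'
    rw [hb, Complex.cpow_def_of_ne_zero hb0, ← Complex.ofReal_log (pow_pos hq0 l).le,
      Real.log_pow, mul_comm]
    push_cast
    ring_nf
    rw [hLdef]
  -- norm of exponentials
  have hnormexp : ∀ w : ℂ, ‖Complex.exp (w * L)‖ = q ^ w.re := by
    intro w
    rw [Complex.norm_exp]
    have : (w * L).re = w.re * Real.log q := by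
      simp [hLdef, Complex.mul_re]
    rw [this, Real.rpow_def_of_pos hq0, mul_comm]
  -- the double-indexed family
  set F : ℕ → ℕ → ℂ := fun l j =>
    (1 - (q : ℂ)) * ((-1 : ℂ) ^ j * (q : ℂ) ^ (j * (j + 1) / 2) *
      Complex.exp ((z + (j : ℂ)) * L) ^ l / qFact (q : ℂ) j) with hFdef
  -- norm of F
  have hFnorm : ∀ l j, ‖F l j‖ =
      (1 - q) * (q ^ (j * (j + 1) / 2) * (q ^ (z.re + j) : ℝ) ^ l / ‖qFact (q : ℂ) j‖) := by
    intro l j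
    have h1 : ‖(1 - (q : ℂ))‖ = 1 - q := by
      rw [show (1 - (q : ℂ)) = ((1 - q : ℝ) : ℂ) by push_cast; ring,
        Complex.norm_real, Real.norm_eq_abs, abs_of_pos (by linarith)]
    have h2 : ‖Complex.exp ((z + (j : ℂ)) * L) ^ l‖ = ((q : ℝ) ^ (z.re + j) : ℝ) ^ l := by
      rw [norm_pow, hnormexp]
      norm_num
    simp only [hFdef, norm_mul, norm_div, norm_pow, norm_neg, norm_one, one_pow, one_mul,
      Complex.norm_natCast]
    rw [h1]
    rw [show ‖Complex.exp ((z + (j:ℂ)) * L)‖ ^ l = ((q:ℝ) ^ (z.re + j) : ℝ) ^ l by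
      rw [← norm_pow, h2]]
    rw [show ‖(q:ℂ)‖ = q from by rw [Complex.norm_real, Real.norm_eq_abs, abs_of_pos hq0]]
  have h1Q : (1 : ℂ) - (q : ℂ) ≠ 0 := by
    rw [sub_ne_zero]
    intro h
    have : (1 : ℝ) = q := by exact_mod_cast h
    linarith
  -- pointwise identity
  have key : ∀ l j : ℕ,
      (1 - (q : ℂ)) * (((q : ℂ) ^ l * ((q : ℂ) ^ l) ^ (z - 1)) *
        ((q : ℂ) ^ (j * (j - 1) / 2) * (-(q : ℂ) * (q : ℂ) ^ l) ^ j / qFact (q : ℂ) j)) =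
      F l j := by
    intro l j
    have e3 : Complex.exp ((z + (j : ℂ)) * L) ^ l
        = Complex.exp ((l : ℂ) * ((z + (j : ℂ)) * L)) := (Complex.exp_nat_mul _ l).symm
    have epow : (q : ℂ) ^ (j * (j + 1) / 2) = (q : ℂ) ^ (j * (j - 1) / 2) * (q : ℂ) ^ j := by
      rw [← pow_add]
      congr 1
      rcases j with _ | k
      · simp
      · obtain ⟨d, hd⟩ := Nat.even_mul_succ_self k
        have h1 : (k + 1) * (k + 1 - 1) = k * (k + 1) := by rw [Nat.add_sub_cancel]; ring
        have h2 : (k + 1) * (k + 1 + 1) = k * (k + 1) + 2 * (k + 1) := by ring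
        omega
    have h4 : (-(q : ℂ) * (q : ℂ) ^ l) ^ j
        = (-1 : ℂ) ^ j * Complex.exp ((j : ℂ) * L) * Complex.exp (((l : ℂ) * (j : ℂ)) * L) := by
      rw [neg_mul, neg_pow, mul_pow, ← pow_mul, hnpow j, hnpow (l * j)]
      push_cast; ring
    have eexp : Complex.exp ((l : ℂ) * L) * Complex.exp ((z - 1) * ((l : ℂ) * L)) *
          Complex.exp ((j : ℂ) * L) * Complex.exp (((l : ℂ) * (j : ℂ)) * L)
        = Complex.exp ((j : ℂ) * L) * Complex.exp ((l : ℂ) * ((z + (j : ℂ)) * L)) := by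
      rw [← Complex.exp_add, ← Complex.exp_add, ← Complex.exp_add, ← Complex.exp_add]
      congr 1; ring
    simp only [hFdef]
    rw [hcpowl l (z - 1), h4, epow, hnpow j, hnpow l, e3]
    linear_combination ((1 - (q : ℂ)) * (q : ℂ) ^ (j * (j - 1) / 2) * (-1 : ℂ) ^ j /
      qFact (q : ℂ) j) * eexp
  -- row sums
  have hrow : ∀ l : ℕ,
      (1 - (q : ℂ)) * ((q : ℂ) ^ l * (((q : ℂ) ^ l : ℂ) ^ (z - 1)) *
        qExpE (q : ℂ) (-(q : ℂ) * (q : ℂ) ^ l)) = ∑' j : ℕ, F l j := by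
    intro l
    rw [qExpE, mul_assoc, ← tsum_mul_left, ← tsum_mul_left, ← tsum_mul_left]
    exact tsum_congr fun j => by
      rw [← key l j]; ring
  -- summability of the double family, indexed by (j, l)
  have hb_sum : Summable fun p : ℕ × ℕ => (q : ℝ) ^ p.1 * ((q : ℝ) ^ z.re : ℝ) ^ p.2 := by
    refine Summable.mul_of_nonneg (summable_geometric_of_lt_one hq0.le hq1)
      (summable_geometric_of_lt_one (Real.rpow_nonneg hq0.le _)
        (Real.rpow_lt_one hq0.le hq1 hz)) (fun n => by positivity) (fun n => by positivity)
  have hFle : ∀ p : ℕ × ℕ, ‖F p.2 p.1‖ ≤ (q : ℝ) ^ p.1 * ((q : ℝ) ^ z.re : ℝ) ^ p.2 := by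
    rintro ⟨j, l⟩
    rw [hFnorm]
    have hj : j ≤ j * (j + 1) / 2 := by
      rcases j with _ | k
      · simp
      · have := Nat.mul_le_mul_left (k + 1) (show 2 ≤ k + 1 + 1 by omega)
        omega
    have h1 : (q : ℝ) ^ (j * (j + 1) / 2) ≤ q ^ j :=
      pow_le_pow_of_le_one hq0.le hq1.le hj
    have h2 : ((q : ℝ) ^ (z.re + j) : ℝ) ^ l ≤ ((q : ℝ) ^ z.re : ℝ) ^ l := by
      apply pow_le_pow_left₀ (Real.rpow_nonneg hq0.le _)
      exact Real.rpow_le_rpow_of_exponent_ge hq0 hq1.le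
        (le_add_of_nonneg_right (Nat.cast_nonneg j))
    have h3 : (1 : ℝ) ≤ ‖qFact (q : ℂ) j‖ := one_le_norm_qFact hq0 hq1 j
    have h4 : (0:ℝ) < ‖qFact (q : ℂ) j‖ := by linarith
    calc (1 - q) * (q ^ (j * (j + 1) / 2) * ((q : ℝ) ^ (z.re + j) : ℝ) ^ l / ‖qFact (q : ℂ) j‖)
        ≤ 1 * (q ^ j * ((q : ℝ) ^ z.re : ℝ) ^ l / 1) := by
          apply mul_le_mul (by linarith) ?_ (by positivity) (by norm_num)
          apply div_le_div₀ (by positivity) ?_ (by norm_num) h3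
          exact mul_le_mul h1 h2 (by positivity) (by positivity)
      _ = q ^ j * ((q : ℝ) ^ z.re : ℝ) ^ l := by ring
  have hFnormsum : Summable fun p : ℕ × ℕ => ‖F p.2 p.1‖ :=
    Summable.of_nonneg_of_le (fun _ => norm_nonneg _) hFle hb_sum
  have hFuncurry : Summable (Function.uncurry fun j l => F l j) :=
    Summable.of_norm hFnormsum
  -- geometric ratio
  have hrlt : ∀ j : ℕ, ‖Complex.exp ((z + (j : ℂ)) * L)‖ < 1 := by
    intro j
    rw [hnormexp]
    have : (z + (j : ℂ)).re = z.re + j := by simp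
    rw [this]
    exact Real.rpow_lt_one hq0.le hq1 (by positivity)
  -- column sums
  have hcol : ∀ j : ℕ, ∑' l : ℕ, F l j =
      (-1 : ℂ) ^ j * (q : ℂ) ^ (j * (j + 1) / 2) /
        (qFact (q : ℂ) j * qNumC (q : ℂ) (z + (j : ℂ))) := by
    intro j
    have hre : ∀ l : ℕ, F l j =
        ((1 - (q : ℂ)) * ((-1 : ℂ) ^ j * (q : ℂ) ^ (j * (j + 1) / 2) / qFact (q : ℂ) j)) *
          Complex.exp ((z + (j : ℂ)) * L) ^ l := by
      intro l; simp only [hFdef]; ring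
    rw [tsum_congr hre, tsum_mul_left, tsum_geometric_of_norm_lt_one (hrlt j)]
    have h1r : (1 : ℂ) - Complex.exp ((z + (j : ℂ)) * L) ≠ 0 := by
      rw [sub_ne_zero]
      intro h
      have := hrlt j
      rw [← h] at this
      simp at this
    have hnum : qNumC (q : ℂ) (z + (j : ℂ))
        = (1 - Complex.exp ((z + (j : ℂ)) * L)) / (1 - (q : ℂ)) := by
      rw [qNumC, hcpow]
    rw [hnum]
    have hf := qFact_ne_zero hq0 hq1 j
    field_simp
  -- summability of the norms over (j, l)
  have hprod := (summable_prod_of_nonneg (f := fun p : ℕ × ℕ => ‖F p.2 p.1‖)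
    (fun p => norm_nonneg _)).mp hFnormsum
  constructor
  · apply Summable.of_nonneg_of_le (fun j => norm_nonneg _) ?_ hprod.2
    intro j
    rw [← hcol j]
    exact norm_tsum_le_tsum_norm (hprod.1 j)
  · rw [← tsum_mul_left]
    rw [tsum_congr hrow]
    rw [Summable.tsum_comm (f := fun j l => F l j) hFuncurry]
    exact tsum_congr hcol
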